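/- Let F and G be two cumulative distribution functions on the reals, and let ε > 0. Suppose F and G agree outside a bounded interval [a,b] and that the sup-norm distance between F and G is less than ε. Then for every strike K ≥ 0, the absolute difference between the call-payoff integrals ∫(x−K)⁺ dF(x) and ∫(x−K)⁺ dG(x) (Riemann–Stieltjes integrals) is at most ε·(b−a). -/

import Mathlib

open MeasureTheory Filter Set

/-- Layer-cake identity for the call payoff against a CDF: the Lebesgue integral of
`(x - K)⁺` equals `∫⁻ t in Ioi 0, ofReal (1 - H (K + t))`. -/
lemma call_lintegral_eq (H : StieltjesFunction ℝ) (K : ℝ)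
    (h0 : Tendsto H atBot (nhds 0)) (h1 : Tendsto H atTop (nhds 1)) :
    ∫⁻ x, ENNReal.ofReal (max (x - K) 0) ∂H.measure
      = ∫⁻ t in Set.Ioi (0 : ℝ), ENNReal.ofReal (1 - H (K + t)) := by
  have hprob : IsProbabilityMeasure H.measure := H.isProbabilityMeasure h0 h1
  have hf_meas : Measurable fun x : ℝ => max (x - K) 0 :=
    (measurable_id.sub_const K).max measurable_const
  have hlc := lintegral_eq_lintegral_meas_lt (f := fun x : ℝ => max (x - K) 0) H.measure
    (ae_of_all _ fun x => le_max_right _ _) hf_meas.aemeasurable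
  rw [hlc]
  refine setLIntegral_congr_fun measurableSet_Ioi (fun t ht => ?_)
  have hset : {x : ℝ | t < max (x - K) 0} = Set.Ioi (K + t) := by
    ext x
    simp only [Set.mem_setOf_eq, Set.mem_Ioi, lt_max_iff]
    constructor
    · rintro (h | h)
      · linarith
      · exact absurd ht (by simpa using h.le)
    · intro h
      left; linarith
  rw [hset]
  have hIic := H.measure_Iic h0 (K + t)
  have hcompl : Set.Ioi (K + t) = (Set.Iic (K + t))ᶜ := (Set.compl_Iic).symm
  rw [hcompl, measure_compl measurableSet_Iic (measure_ne_top _ _), measure_univ, hIic]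
  have h0le : (0 : ℝ) ≤ H (K + t) := by
    have := Monotone.le_of_tendsto H.mono h0 (K + t)
    linarith
  rw [sub_zero, ENNReal.ofReal_sub 1 h0le, ENNReal.ofReal_one]

/-- If two CDFs `F`, `G` agree outside `[a,b]` and are uniformly `ε`-close,
then the call-payoff Stieltjes integrals differ by at most `ε * (b - a)`. -/
theorem call_price_bound (F G : StieltjesFunction ℝ) (ε a b : ℝ) (hε : 0 < ε) (hab : a ≤ b)
    (hF0 : Tendsto F atBot (nhds 0)) (hF1 : Tendsto F atTop (nhds 1))
    (hG0 : Tendsto G atBot (nhds 0)) (hG1 : Tendsto G atTop (nhds 1))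
    (hagree : ∀ x : ℝ, x ∉ Set.Icc a b → F x = G x)
    (hsup : ∀ x : ℝ, |F x - G x| < ε) :
    ∀ K : ℝ, 0 ≤ K →
      |(∫ x, max (x - K) 0 ∂F.measure) - ∫ x, max (x - K) 0 ∂G.measure| ≤ ε * (b - a) := by
  intro K _hK
  have hεab : (0 : ℝ) ≤ ε * (b - a) := mul_nonneg hε.le (by linarith)
  have hf_meas : Measurable fun x : ℝ => max (x - K) 0 :=
    (measurable_id.sub_const K).max measurable_const
  set A := ∫⁻ t in Set.Ioi (0 : ℝ), ENNReal.ofReal (1 - F (K + t)) with hA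
  set B := ∫⁻ t in Set.Ioi (0 : ℝ), ENNReal.ofReal (1 - G (K + t)) with hB
  set C := ENNReal.ofReal (ε * (b - a)) with hC
  -- rewrite both integrals via the layer-cake identity
  have hFint : (∫ x, max (x - K) 0 ∂F.measure) = A.toReal := by
    have h := integral_eq_lintegral_of_nonneg_ae (μ := F.measure)
      (f := fun x : ℝ => max (x - K) 0) (ae_of_all _ fun x => le_max_right _ _)
      hf_meas.aestronglyMeasurable
    rw [h, call_lintegral_eq F K hF0 hF1]
  have hGint : (∫ x, max (x - K) 0 ∂G.measure) = B.toReal := by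
    have h := integral_eq_lintegral_of_nonneg_ae (μ := G.measure)
      (f := fun x : ℝ => max (x - K) 0) (ae_of_all _ fun x => le_max_right _ _)
      hf_meas.aestronglyMeasurable
    rw [h, call_lintegral_eq G K hG0 hG1]
  -- generic one-sided bound
  have keybound : ∀ P Q : StieltjesFunction ℝ,
      (∀ x : ℝ, x ∉ Set.Icc a b → P x = Q x) → (∀ x : ℝ, |P x - Q x| < ε) →
      (∫⁻ t in Set.Ioi (0 : ℝ), ENNReal.ofReal (1 - P (K + t)))
        ≤ (∫⁻ t in Set.Ioi (0 : ℝ), ENNReal.ofReal (1 - Q (K + t))) + C := by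
    intro P Q hag hs
    have hptwise : ∀ t : ℝ, ENNReal.ofReal (1 - P (K + t))
        ≤ ENNReal.ofReal (1 - Q (K + t))
          + (Set.Icc (a - K) (b - K)).indicator (fun _ => ENNReal.ofReal ε) t := by
      intro t
      by_cases ht : t ∈ Set.Icc (a - K) (b - K)
      · rw [Set.indicator_of_mem ht]
        have : |P (K + t) - Q (K + t)| < ε := hs (K + t)
        have h1 : 1 - P (K + t) ≤ (1 - Q (K + t)) + ε := by
          have := abs_lt.mp this
          linarith [this.1]
        calc ENNReal.ofReal (1 - P (K + t)) ≤ ENNReal.ofReal ((1 - Q (K + t)) + ε) :=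
              ENNReal.ofReal_le_ofReal h1
          _ ≤ ENNReal.ofReal (1 - Q (K + t)) + ENNReal.ofReal ε := ENNReal.ofReal_add_le
      · have hx : K + t ∉ Set.Icc a b := by
          simp only [Set.mem_Icc, not_and_or, not_le] at ht ⊢
          rcases ht with h | h
          · left; linarith
          · right; linarith
        rw [Set.indicator_of_notMem ht, hag _ hx, add_zero]
    calc (∫⁻ t in Set.Ioi (0 : ℝ), ENNReal.ofReal (1 - P (K + t)))
        ≤ ∫⁻ t in Set.Ioi (0 : ℝ), (ENNReal.ofReal (1 - Q (K + t))
            + (Set.Icc (a - K) (b - K)).indicator (fun _ => ENNReal.ofReal ε) t) :=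
          lintegral_mono fun t => hptwise t
      _ = (∫⁻ t in Set.Ioi (0 : ℝ), ENNReal.ofReal (1 - Q (K + t)))
            + ∫⁻ t in Set.Ioi (0 : ℝ),
              (Set.Icc (a - K) (b - K)).indicator (fun _ => ENNReal.ofReal ε) t := by
          rw [lintegral_add_right]
          exact (measurable_const.indicator measurableSet_Icc)
      _ ≤ (∫⁻ t in Set.Ioi (0 : ℝ), ENNReal.ofReal (1 - Q (K + t))) + C := by
          gcongr
          calc (∫⁻ t in Set.Ioi (0 : ℝ),
                (Set.Icc (a - K) (b - K)).indicator (fun _ => ENNReal.ofReal ε) t)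
              ≤ ∫⁻ t, (Set.Icc (a - K) (b - K)).indicator (fun _ => ENNReal.ofReal ε) t :=
                setLIntegral_le_lintegral _ _
            _ = ENNReal.ofReal ε * volume (Set.Icc (a - K) (b - K)) := by
                rw [lintegral_indicator measurableSet_Icc]
                simp [mul_comm]
            _ = C := by
                rw [Real.volume_Icc, hC]
                rw [show b - K - (a - K) = b - a by ring, ← ENNReal.ofReal_mul hε.le]
      _ = (∫⁻ t in Set.Ioi (0 : ℝ), ENNReal.ofReal (1 - Q (K + t))) + C := rfl
  have hAB : A ≤ B + C := keybound F G hagree hsup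
  have hBA : B ≤ A + C := keybound G F
    (fun x hx => (hagree x hx).symm) (fun x => by rw [abs_sub_comm]; exact hsup x)
  have hCne : C ≠ ⊤ := ENNReal.ofReal_ne_top
  by_cases hAtop : A = ⊤
  · have hBtop : B = ⊤ := by
      by_contra hB'
      exact (ne_top_of_le_ne_top (ENNReal.add_ne_top.mpr ⟨hB', hCne⟩) hAB) hAtop
    rw [hFint, hGint, hAtop, hBtop]
    simpa using hεab
  · have hBtop : B ≠ ⊤ := ne_top_of_le_ne_top (ENNReal.add_ne_top.mpr ⟨hAtop, hCne⟩) hBA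
    rw [hFint, hGint, abs_sub_le_iff]
    constructor
    · have := ENNReal.toReal_mono (ENNReal.add_ne_top.mpr ⟨hBtop, hCne⟩) hAB
      rw [ENNReal.toReal_add hBtop hCne] at this
      rw [hC] at this
      rw [ENNReal.toReal_ofReal hεab] at this
      linarith
    · have := ENNReal.toReal_mono (ENNReal.add_ne_top.mpr ⟨hAtop, hCne⟩) hBA
      rw [ENNReal.toReal_add hAtop hCne] at this
      rw [hC] at this
      rw [ENNReal.toReal_ofReal hεab] at this
      linarith
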